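/- Every Borel probability measure on a metric space has separable support, i.e. the support of the measure is a separable subspace of the metric space. -/

import Mathlib

open MeasureTheory Filter Topology Set
open scoped ENNReal

noncomputable section

/-- The support of a Borel measure: the set of points all of whose open
neighbourhoods have positive measure. -/
def msupport {X : Type*} [TopologicalSpace X] [MeasurableSpace X]
    (μ : Measure X) : Set X :=
  {x | ∀ U : Set X, IsOpen U → x ∈ U → 0 < μ U}

/-- Every Borel probability measure on a metric space has separable support. -/
theorem support_of_probabilityMeasure_separable
    {X : Type*} [MetricSpace X] [MeasurableSpace X] [BorelSpace X]
    (μ : Measure X) [IsProbabilityMeasure μ] :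
    TopologicalSpace.IsSeparable (msupport μ) := by
  set S := msupport μ with hS
  have key : ∀ r > (0:ℝ≥0∞), ∃ t : Set X, t.Countable ∧ S ⊆ ⋃ x ∈ t, EMetric.closedBall x r := ?_
  · obtain ⟨t, -, htc, hst⟩ := EMetric.subset_countable_closure_of_almost_dense_set S key
    exact ⟨t, htc, hst⟩
  intro r hr
  -- take a maximal r-separated subset of S
  have hzorn : ∀ c ⊆ {T : Set X | T ⊆ S ∧ T.Pairwise (fun x y => r < edist x y)},
      IsChain (· ⊆ ·) c → ∃ ub ∈ {T : Set X | T ⊆ S ∧ T.Pairwise (fun x y => r < edist x y)},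
        ∀ s ∈ c, s ⊆ ub := by
    intro c hc hchain
    refine ⟨⋃₀ c, ⟨?_, ?_⟩, fun s hs => subset_sUnion_of_mem hs⟩
    · exact sUnion_subset fun s hs => (hc hs).1
    · intro x hx y hy hxy
      obtain ⟨s, hs, hxs⟩ := hx
      obtain ⟨u, hu, hyu⟩ := hy
      rcases hchain.total hs hu with h | h
      · exact (hc hu).2 (h hxs) hyu hxy
      · exact (hc hs).2 hxs (h hyu) hxy
  obtain ⟨T, hTmax⟩ := zorn_subset
      {T : Set X | T ⊆ S ∧ T.Pairwise (fun x y => r < edist x y)} hzorn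
  obtain ⟨⟨hTS, hTsep⟩, hmax⟩ := hTmax
  -- the balls of radius r/2 around points of T are pairwise disjoint and have positive measure
  have hpos : ∀ x ∈ T, 0 < μ (EMetric.ball x (r / 2)) := by
    intro x hx
    exact hTS hx _ EMetric.isOpen_ball (EMetric.mem_ball_self (ENNReal.half_pos hr.ne'))
  have hdisj : Pairwise (Function.onFun Disjoint fun x : T => EMetric.ball (x : X) (r / 2)) := by
    intro x y hxy
    refine Set.disjoint_left.2 fun z hzx hzy => ?_
    have h1 : r < edist (x : X) y := hTsep x.2 y.2 (Subtype.coe_ne_coe.mpr hxy)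
    have h2 : edist (x : X) y < r := by
      calc edist (x : X) y ≤ edist (x : X) z + edist z (y : X) := edist_triangle _ _ _
        _ < r / 2 + r / 2 := by
            have hzx' : edist (x : X) z < r / 2 := by
              rw [edist_comm]; exact EMetric.mem_ball.mp hzx
            exact ENNReal.add_lt_add hzx' (EMetric.mem_ball.mp hzy)
        _ = r := ENNReal.add_halves r
    exact absurd (h1.trans h2) (lt_irrefl r)
  have hcount : T.Countable := by
    have := MeasureTheory.Measure.countable_meas_pos_of_disjoint_iUnion
      (μ := μ) (As := fun x : T => EMetric.ball (x : X) (r / 2))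
      (fun x => measurableSet_eball) hdisj
    have heq : {i : T | 0 < μ (EMetric.ball (i : X) (r / 2))} = Set.univ := by
      ext x; simpa using hpos x x.2
    rw [heq] at this
    exact (Set.countable_coe_iff.mp (Set.countable_univ_iff.mp this)).mono le_rfl
  refine ⟨T, hcount, fun x hx => ?_⟩
  -- maximality: every point of S is within r of T
  by_cases hxT : ∃ y ∈ T, edist x y ≤ r
  · obtain ⟨y, hy, hxy⟩ := hxT
    exact Set.mem_biUnion hy (EMetric.mem_closedBall.2 hxy)
  · push_neg at hxT
    exfalso
    have hxnotT : x ∉ T := fun h => by simpa using hr.trans (hxT x h)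
    have : insert x T ∈ {T : Set X | T ⊆ S ∧ T.Pairwise (fun x y => r < edist x y)} := by
      constructor
      · exact Set.insert_subset hx hTS
      · intro a ha b hb hab
        rcases ha with rfl | ha
        · rcases hb with rfl | hb
          · exact absurd rfl hab
          · exact hxT b hb
        · rcases hb with rfl | hb
          · rw [edist_comm]; exact hxT a ha
          · exact hTsep ha hb hab
    have := hmax this (Set.subset_insert x T)
    exact hxnotT (this (Set.mem_insert x T))
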